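/- As formal power series, the Motzkin generating function satisfies M(z) = Σ_{n≥0} C_n · z^{2n}/(1−z)^{2n+1}, where C_n are the Catalan numbers; equivalently (1−z)·M(z) = C(z^2/(1−z)^2) where C is the Catalan generating function. -/

import Mathlib

open PowerSeries Finset

noncomputable section MotzkinAux

/-- `A = (1-X)⁻¹` in `ℚ⟦X⟧`. -/
private def A : PowerSeries ℚ := (1 - X)⁻¹

private lemma hA : (1 - X) * A = 1 :=
  PowerSeries.mul_inv_cancel _ (by simp)

private lemma hA' : (1 : PowerSeries ℚ) + X * A = A := by
  linear_combination -hA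

/-- `U = X²/(1-X)²`. -/
private def U : PowerSeries ℚ := X ^ 2 * A ^ 2

private lemma U_pow (n : ℕ) : U ^ n = X ^ (2 * n) * A ^ (2 * n) := by
  rw [U, mul_pow, ← pow_mul, ← pow_mul]

private lemma AU_eq (n : ℕ) : A * U ^ n = X ^ (2 * n) * A ^ (2 * n + 1) := by
  rw [U_pow, pow_succ]; ring

private lemma T_eq (n : ℕ) :
    (X : PowerSeries ℚ) ^ (2 * n) * ((1 - X) ^ (2 * n + 1))⁻¹ = A * U ^ n := by
  have h2 : ((1 - (X : PowerSeries ℚ)) ^ (2 * n + 1))⁻¹ = A ^ (2 * n + 1) := by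
    rw [PowerSeries.inv_eq_iff_mul_eq_one (by simp), ← mul_pow, mul_comm A, hA, one_pow]
  rw [h2, AU_eq]

private lemma coeff_X_pow_mul_zero {f : PowerSeries ℚ} {k s : ℕ} (h : s < k) :
    coeff (R := ℚ) s (X ^ k * f) = 0 := by
  rw [PowerSeries.coeff_X_pow_mul', if_neg (by omega)]

private lemma coeff_AU_zero {s n : ℕ} (h : s < 2 * n) :
    coeff (R := ℚ) s (A * U ^ n) = 0 := by
  rw [AU_eq]; exact coeff_X_pow_mul_zero h

private lemma coeff_U_pow_zero {s n : ℕ} (h : s < 2 * n) :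
    coeff (R := ℚ) s (U ^ n) = 0 := by
  rw [U_pow]; exact coeff_X_pow_mul_zero h

/-- truncated Catalan polynomial -/
private def q (K : ℕ) : Polynomial ℚ :=
  ∑ n ∈ range K, Polynomial.monomial n (catalan n : ℚ)

private lemma coeff_q (K m : ℕ) :
    (q K).coeff m = if m < K then (catalan m : ℚ) else 0 := by
  rw [q, Polynomial.finset_sum_coeff]
  simp only [Polynomial.coeff_monomial]
  rw [Finset.sum_ite_eq' (range K) m (fun n => (catalan n : ℚ))]
  simp [mem_range]

private lemma poly_key (K : ℕ) : ∀ m < K,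
    (Polynomial.X * (q K) ^ 2).coeff m = ((q K) - 1).coeff m := by
  intro m hm
  cases m with
  | zero =>
    rw [Polynomial.mul_coeff_zero]
    simp [coeff_q, hm]
  | succ n =>
    rw [Polynomial.coeff_X_mul, pow_two, Polynomial.coeff_mul]
    have hsum : ∑ ij ∈ antidiagonal n, (q K).coeff ij.1 * (q K).coeff ij.2
        = ∑ ij ∈ antidiagonal n, ((catalan ij.1 : ℚ) * (catalan ij.2 : ℚ)) := by
      apply sum_congr rfl
      rintro ⟨i, j⟩ hij
      rw [Finset.HasAntidiagonal.mem_antidiagonal] at hij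
      rw [coeff_q, coeff_q, if_pos (by omega), if_pos (by omega)]
    rw [hsum]
    have : ((catalan (n + 1) : ℚ)) = ∑ ij ∈ antidiagonal n,
        ((catalan ij.1 : ℚ) * (catalan ij.2 : ℚ)) := by
      rw_mod_cast [catalan_succ']
    rw [← this, Polynomial.coeff_sub, coeff_q, if_pos hm]
    simp [Polynomial.coeff_one]

/-- `Q K` is the truncated Catalan series evaluated at `U`. -/
private def Q (K : ℕ) : PowerSeries ℚ :=
  ∑ n ∈ range K, PowerSeries.C (catalan n : ℚ) * U ^ n

private lemma Q_eq_aeval (K : ℕ) : Q K = Polynomial.aeval U (q K) := by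
  rw [q, map_sum]
  apply sum_congr rfl
  intro n _
  rw [Polynomial.aeval_monomial]
  congr 1

private lemma coeff_aeval_congr (r r' : Polynomial ℚ) (K s : ℕ) (hs : s < 2 * K)
    (h : ∀ m < K, r.coeff m = r'.coeff m) :
    coeff (R := ℚ) s (Polynomial.aeval U r) = coeff (R := ℚ) s (Polynomial.aeval U r') := by
  set B := max (max (r.natDegree + 1) (r'.natDegree + 1)) K with hB
  rw [Polynomial.aeval_eq_sum_range' (n := B) (by omega) U,
      Polynomial.aeval_eq_sum_range' (n := B) (by omega) U, map_sum, map_sum]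
  apply sum_congr rfl
  intro m _
  rw [PowerSeries.coeff_smul, PowerSeries.coeff_smul, smul_eq_mul, smul_eq_mul]
  by_cases hmK : m < K
  · rw [h m hmK]
  · rw [coeff_U_pow_zero (by omega), mul_zero, mul_zero]

/-- the candidate series -/
private def N : PowerSeries ℚ :=
  PowerSeries.mk fun t => ∑ n ∈ range (t + 1), (catalan n : ℚ) * coeff (R := ℚ) t (A * U ^ n)

private lemma coeff_N_eq (t K : ℕ) (hK : t < K) :
    coeff (R := ℚ) t N = ∑ n ∈ range K, (catalan n : ℚ) * coeff (R := ℚ) t (A * U ^ n) := by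
  rw [N, PowerSeries.coeff_mk]
  apply Finset.sum_subset (Finset.range_subset_range.2 (by omega))
  intro n _ hn
  rw [mem_range, not_lt] at hn
  rw [coeff_AU_zero (by omega), mul_zero]

private lemma coeff_N_eq_P (t K : ℕ) (hK : t < K) :
    coeff (R := ℚ) t N = coeff (R := ℚ) t (A * Q K) := by
  rw [coeff_N_eq t K hK, Q, Finset.mul_sum, map_sum]
  apply sum_congr rfl
  intro n _
  rw [show A * (PowerSeries.C (catalan n : ℚ) * U ^ n)
      = PowerSeries.C (catalan n : ℚ) * (A * U ^ n) by ring,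
    PowerSeries.coeff_C_mul]

private lemma coeff_mul_congr {f f' g g' : PowerSeries ℚ} {t : ℕ}
    (hf : ∀ s ≤ t, coeff (R := ℚ) s f = coeff (R := ℚ) s f')
    (hg : ∀ s ≤ t, coeff (R := ℚ) s g = coeff (R := ℚ) s g') :
    ∀ s ≤ t, coeff (R := ℚ) s (f * g) = coeff (R := ℚ) s (f' * g') := by
  intro s hs
  rw [PowerSeries.coeff_mul, PowerSeries.coeff_mul]
  apply sum_congr rfl
  rintro ⟨i, j⟩ hij
  rw [Finset.HasAntidiagonal.mem_antidiagonal] at hij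
  rw [hf i (by omega), hg j (by omega)]

private lemma hN (t : ℕ) :
    coeff (R := ℚ) t N = coeff (R := ℚ) t (1 + X * N + X ^ 2 * N ^ 2) := by
  set K := t + 1 with hKdef
  set P : PowerSeries ℚ := A * Q K with hPdef
  have hlow : ∀ s ≤ t, coeff (R := ℚ) s N = coeff (R := ℚ) s P := fun s hs =>
    coeff_N_eq_P s K (by omega)
  -- step: replace N by P in the RHS
  have hXN : ∀ s ≤ t, coeff (R := ℚ) s (X * N) = coeff (R := ℚ) s (X * P) :=
    coeff_mul_congr (fun s _ => rfl) hlow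
  have hN2 : ∀ s ≤ t, coeff (R := ℚ) s (N ^ 2) = coeff (R := ℚ) s (P ^ 2) := by
    intro s hs
    rw [pow_two, pow_two]
    exact coeff_mul_congr hlow hlow s hs
  have hXN2 : ∀ s ≤ t, coeff (R := ℚ) s (X ^ 2 * N ^ 2) = coeff (R := ℚ) s (X ^ 2 * P ^ 2) :=
    coeff_mul_congr (fun s _ => rfl) hN2
  have h2 : coeff (R := ℚ) t (1 + X * N + X ^ 2 * N ^ 2)
      = coeff (R := ℚ) t (1 + X * P + X ^ 2 * P ^ 2) := by
    simp only [map_add]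
    rw [hXN t le_rfl, hXN2 t le_rfl]
  -- the algebraic identity for P up to degree t
  have e1 : X ^ 2 * P ^ 2 = U * (Q K) ^ 2 := by
    rw [hPdef, U]; ring
  have e3 : coeff (R := ℚ) t (U * Q K ^ 2) = coeff (R := ℚ) t (Q K - 1) := by
    have hU2 : U * Q K ^ 2 = Polynomial.aeval U (Polynomial.X * (q K) ^ 2) := by
      rw [map_mul, map_pow, Polynomial.aeval_X, ← Q_eq_aeval]
    have hQ1 : (Q K - 1 : PowerSeries ℚ) = Polynomial.aeval U ((q K) - 1) := by
      rw [map_sub, map_one, ← Q_eq_aeval]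
    rw [hU2, hQ1]
    exact coeff_aeval_congr _ _ K t (by omega) (poly_key K)
  have key : (1 : PowerSeries ℚ) + X * P + (Q K - 1) = P := by
    rw [hPdef]
    linear_combination (Q K) * hA'
  have h3 : coeff (R := ℚ) t (1 + X * P + X ^ 2 * P ^ 2) = coeff (R := ℚ) t P := by
    rw [e1]
    have hkey := congrArg (coeff (R := ℚ) t) key
    simp only [map_add] at hkey ⊢
    rw [e3]
    exact hkey
  rw [hlow t le_rfl, h2, h3]

private lemma M_eq_N (M : PowerSeries ℚ)
    (hM : M = 1 + X * M + X ^ 2 * M ^ 2) :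
    ∀ t, coeff (R := ℚ) t M = coeff (R := ℚ) t N := by
  intro t
  induction t using Nat.strong_induction_on with
  | _ t ih =>
    have hMc : coeff (R := ℚ) t M = coeff (R := ℚ) t (1 + X * M + X ^ 2 * M ^ 2) := by rw [← hM]
    rw [hMc, hN t]
    simp only [map_add]
    have hXMN : coeff (R := ℚ) t (X * M) = coeff (R := ℚ) t (X * N) := by
      cases t with
      | zero => simp [PowerSeries.coeff_zero_eq_constantCoeff]
      | succ s =>
        rw [PowerSeries.coeff_succ_X_mul, PowerSeries.coeff_succ_X_mul]
        exact ih s (by omega)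
    have hX2 : coeff (R := ℚ) t (X ^ 2 * M ^ 2) = coeff (R := ℚ) t (X ^ 2 * N ^ 2) := by
      rw [PowerSeries.coeff_X_pow_mul', PowerSeries.coeff_X_pow_mul']
      by_cases h2t : 2 ≤ t
      · rw [if_pos h2t, if_pos h2t, pow_two, pow_two,
          PowerSeries.coeff_mul, PowerSeries.coeff_mul]
        apply sum_congr rfl
        rintro ⟨i, j⟩ hij
        rw [Finset.HasAntidiagonal.mem_antidiagonal] at hij
        rw [ih i (by omega), ih j (by omega)]
      · rw [if_neg h2t, if_neg h2t]
    rw [hXMN, hX2]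

end MotzkinAux

/-- The Motzkin generating function `M(z)` (the unique formal power series with
`M = 1 + z·M + z^2·M^2`) satisfies `M(z) = ∑_{n≥0} C_n · z^(2n)/(1−z)^(2n+1)`,
where `C_n` are the Catalan numbers.  The (coefficientwise finite) infinite sum
is expressed via `finsum`, and division is the inverse of the unit `(1−z)^(2n+1)`
in `ℚ⟦z⟧`. -/
theorem motzkin_gf_eq_sum_catalan (M : PowerSeries ℚ)
    (hM : M = 1 + X * M + X ^ 2 * M ^ 2) (t : ℕ) :
    (PowerSeries.coeff (R := ℚ) t) M =
      ∑ᶠ n : ℕ,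
        (catalan n : ℚ) *
          (PowerSeries.coeff (R := ℚ) t) (X ^ (2 * n) * ((1 - X) ^ (2 * n + 1))⁻¹) := by
  have hfun : ∀ n : ℕ, (catalan n : ℚ) *
      (PowerSeries.coeff (R := ℚ) t) (X ^ (2 * n) * ((1 - X) ^ (2 * n + 1))⁻¹)
      = (catalan n : ℚ) * coeff (R := ℚ) t (A * U ^ n) := fun n => by rw [T_eq]
  rw [finsum_congr hfun]
  have hsupp : (Function.support fun n : ℕ =>
      (catalan n : ℚ) * coeff (R := ℚ) t (A * U ^ n)) ⊆ ↑(Finset.range (t + 1)) := by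
    intro n hn
    simp only [Function.mem_support] at hn
    simp only [Finset.coe_range, Set.mem_Iio]
    by_contra h
    exact hn (by rw [coeff_AU_zero (by omega), mul_zero])
  rw [finsum_eq_sum_of_support_subset _ hsupp]
  rw [M_eq_N M hM t, N, PowerSeries.coeff_mk]
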